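/- Every subgroup of an arbitrary free abelian group is free (proved via smooth decompositions: intersect a smooth filtration witnessing freeness of the ambient group with the subgroup and apply Eklof's criterion). -/

import Mathlib

open Finsupp Submodule

/-- Every submodule of `ι →₀ ℤ` over a well-ordered index type is free. -/
theorem free_submodule_finsupp_int {ι : Type*} [LinearOrder ι] [WellFoundedLT ι]
    (N : Submodule ℤ (ι →₀ ℤ)) : Module.Free ℤ N := by
  classical
  -- the submodule of functions supported on `Iic i`
  let M : ι → Submodule ℤ (ι →₀ ℤ) := fun i =>
    { carrier := {f | ∀ j, i < j → f j = 0}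
      add_mem' := fun hf hg j hj => by
        simp [Finsupp.add_apply, hf j hj, hg j hj]
      zero_mem' := fun j _ => rfl
      smul_mem' := fun c f hf j hj => by
        simp [Finsupp.smul_apply, hf j hj] }
  let I : ι → Ideal ℤ := fun i => Submodule.map (Finsupp.lapply i) (N ⊓ M i)
  let g : ι → ℤ := fun i => Submodule.IsPrincipal.generator (I i)
  have hgmem : ∀ i, ∃ f, (f ∈ N ∧ f ∈ M i) ∧ f i = g i := by
    intro i
    have := Submodule.IsPrincipal.generator_mem (I i)
    obtain ⟨f, hf, hfi⟩ := Submodule.mem_map.mp this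
    exact ⟨f, Submodule.mem_inf.mp hf, hfi⟩
  choose w hwNM hwg using hgmem
  have hwN : ∀ i, w i ∈ N := fun i => (hwNM i).1
  have hwM : ∀ i j, i < j → w i j = 0 := fun i => (hwNM i).2
  set v : {i : ι // g i ≠ 0} → (ι →₀ ℤ) := fun i => w i.1 with hv
  -- main spanning lemma by well-founded induction
  have main : ∀ i : ι, ∀ f ∈ N, (∀ j, i < j → f j = 0) →
      f ∈ span ℤ (Set.range v) := by
    intro i
    induction i using WellFoundedLT.induction with
    | _ i IH =>
      intro f hfN hfi
      by_cases hfi0 : f i = 0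
      · by_cases hf0 : f = 0
        · simp [hf0]
        · have hne : f.support.Nonempty := Finsupp.support_nonempty_iff.mpr hf0
          set m := f.support.max' hne with hm
          have hmmem : m ∈ f.support := f.support.max'_mem hne
          have hfm : f m ≠ 0 := Finsupp.mem_support_iff.mp hmmem
          have hmi : m < i := by
            rcases lt_trichotomy m i with h | h | h
            · exact h
            · exact absurd hfi0 (h ▸ hfm)
            · exact absurd (hfi m h) hfm
          exact IH m hmi f hfN (fun j hj => by
            by_contra hfj
            exact absurd (f.support.le_max' j (Finsupp.mem_support_iff.mpr hfj)) (not_le.mpr hj))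
      · -- f i ≠ 0 : subtract a multiple of w i
        have hfI : f i ∈ I i := Submodule.mem_map.mpr
          ⟨f, Submodule.mem_inf.mpr ⟨hfN, hfi⟩, Finsupp.lapply_apply i f⟩
        obtain ⟨c, hc⟩ := (Submodule.IsPrincipal.mem_iff_generator_dvd (I i)).mp hfI
        have hgne : g i ≠ 0 := fun h => hfi0 (by rw [hc]; exact mul_eq_zero_of_left h c)
        have hvr : w i ∈ Set.range v := ⟨⟨i, hgne⟩, rfl⟩
        set f' := f - c • w i with hf'
        have hf'N : f' ∈ N := N.sub_mem hfN (N.smul_mem c (hwN i))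
        have hf'i : f' i = 0 := by
          simp [hf', Finsupp.sub_apply, Finsupp.smul_apply, hwg i, hc, mul_comm]
          exact sub_self _
        have hf'j : ∀ j, i < j → f' j = 0 := fun j hj => by
          simp [hf', Finsupp.sub_apply, Finsupp.smul_apply, hfi j hj, hwM i j hj]
        have hsplit : f = f' + c • w i := by simp [hf']
        by_cases hf'0 : f' = 0
        · rw [hsplit, hf'0, zero_add]
          exact Submodule.smul_mem _ _ (subset_span hvr)
        · have hne : f'.support.Nonempty := Finsupp.support_nonempty_iff.mpr hf'0
          set m := f'.support.max' hne with hm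
          have hmmem : m ∈ f'.support := f'.support.max'_mem hne
          have hfm : f' m ≠ 0 := Finsupp.mem_support_iff.mp hmmem
          have hmi : m < i := by
            rcases lt_trichotomy m i with h | h | h
            · exact h
            · exact absurd hf'i (h ▸ hfm)
            · exact absurd (hf'j m h) hfm
          have hf'span : f' ∈ span ℤ (Set.range v) :=
            IH m hmi f' hf'N (fun j hj => by
              by_contra hfj
              exact absurd (f'.support.le_max' j (Finsupp.mem_support_iff.mpr hfj))
                (not_le.mpr hj))
          rw [hsplit]
          exact Submodule.add_mem _ hf'span (Submodule.smul_mem _ _ (subset_span hvr))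
  have hspan : span ℤ (Set.range v) = N := by
    apply le_antisymm
    · rw [span_le]
      rintro _ ⟨i, rfl⟩
      exact hwN i.1
    · intro f hf
      by_cases hf0 : f = 0
      · simp [hf0]
      · have hne : f.support.Nonempty := Finsupp.support_nonempty_iff.mpr hf0
        exact main (f.support.max' hne) f hf (fun j hj => by
          by_contra hfj
          exact absurd (f.support.le_max' j (Finsupp.mem_support_iff.mpr hfj))
            (not_le.mpr hj))
  have hli : LinearIndependent ℤ v := by
    rw [linearIndependent_iff']
    intro s c hsum i hi
    by_contra hci
    have htne : (s.filter (fun j => c j ≠ 0)).Nonempty :=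
      ⟨i, Finset.mem_filter.mpr ⟨hi, hci⟩⟩
    set i₀ := (s.filter (fun j => c j ≠ 0)).max' htne with hi₀def
    have hi₀mem := (s.filter (fun j => c j ≠ 0)).max'_mem htne
    have hi₀s : i₀ ∈ s := (Finset.mem_filter.mp hi₀mem).1
    have hci₀ : c i₀ ≠ 0 := (Finset.mem_filter.mp hi₀mem).2
    have heval := congrArg (fun f : ι →₀ ℤ => f i₀.1) hsum
    simp only [Finsupp.finset_sum_apply, Finsupp.smul_apply, smul_eq_mul,
      Finsupp.coe_zero, Pi.zero_apply] at heval
    rw [Finset.sum_eq_single i₀] at heval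
    · have hvi₀ : v i₀ i₀.1 = g i₀.1 := hwg i₀.1
      rw [hvi₀] at heval
      exact absurd heval (mul_ne_zero hci₀ i₀.2)
    · intro j hj hne
      by_cases hcj : c j = 0
      · simp [hcj]
      · have hjt : j ∈ s.filter (fun j => c j ≠ 0) := Finset.mem_filter.mpr ⟨hj, hcj⟩
        have hle : j ≤ i₀ := (s.filter (fun j => c j ≠ 0)).le_max' j hjt
        have hlt : j.1 < i₀.1 :=
          lt_of_le_of_ne hle (fun h => hne (Subtype.ext h))
        have : v j i₀.1 = 0 := hwM j.1 i₀.1 hlt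
        simp [this]
    · intro h; exact absurd hi₀s h
  exact Module.Free.of_basis ((Module.Basis.span hli).map (LinearEquiv.ofEq _ _ hspan))

/-- Every submodule of `ι →₀ ℤ` is free. -/
theorem free_submodule_finsupp_int' {ι : Type*} (N : Submodule ℤ (ι →₀ ℤ)) :
    Module.Free ℤ N := by
  classical
  letI : LinearOrder ι := linearOrderOfSTO (WellOrderingRel : ι → ι → Prop)
  haveI : WellFoundedLT ι := inferInstanceAs (IsWellFounded ι WellOrderingRel)
  exact free_submodule_finsupp_int N

/-- Every subgroup of a free abelian group (of arbitrary cardinality) is free. -/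
theorem addSubgroup_free_of_free
    (G : Type*) [AddCommGroup G] (hG : Module.Free ℤ G)
    (H : AddSubgroup G) : Module.Free ℤ H := by
  haveI := hG
  let b := Module.Free.chooseBasis ℤ G
  let e : G ≃ₗ[ℤ] (Module.Free.ChooseBasisIndex ℤ G →₀ ℤ) := b.repr
  let Nsub := H.toIntSubmodule
  let N := Nsub.map e.toLinearMap
  haveI : Module.Free ℤ N := free_submodule_finsupp_int' N
  have e2 : Nsub ≃ₗ[ℤ] N :=
    Submodule.equivMapOfInjective e.toLinearMap e.injective Nsub
  have e3 : N ≃ₗ[ℤ] H := e2.symm.trans (LinearEquiv.refl ℤ Nsub : Nsub ≃ₗ[ℤ] H)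
  exact Module.Free.of_equiv e3
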